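/- Let μ be continuous on [0,1] with μ(0) ≠ 0. Then K(p) ∼ p^{−1}(log(1/p))^{−1} μ(0) as p → 0 within ℂ ∖ (−∞,0]; more precisely, p · (−Log p) · K(p) → μ(0) as p → 0, p ∈ ℂ ∖ (−∞,0], where Log is the principal branch of the logarithm. -/

import Mathlib

open MeasureTheory Filter Set

/-- `K(p) = ∫₀¹ p^{α-1} μ(α) dα`, with `p^{α-1} = exp((α-1) Log p)` using the
principal branch of the logarithm. -/
noncomputable def Kfun (μ : ℝ → ℝ) (p : ℂ) : ℂ :=
  ∫ α in (0:ℝ)..1, Complex.exp (((α : ℂ) - 1) * Complex.log p) * (μ α : ℂ)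

lemma intAux {h : ℝ → ℝ} (hc : ContinuousOn h (Set.Icc 0 1)) (L : ℂ) {a b : ℝ}
    (ha : a ∈ Set.Icc (0:ℝ) 1) (hb : b ∈ Set.Icc (0:ℝ) 1) :
    IntervalIntegrable (fun α : ℝ => Complex.exp ((α : ℂ) * L) * (h α : ℂ))
      volume a b := by
  apply ContinuousOn.intervalIntegrable
  have hsub : Set.uIcc a b ⊆ Set.Icc (0:ℝ) 1 := by
    have h01 : Set.uIcc (0:ℝ) 1 = Set.Icc 0 1 := Set.uIcc_of_le zero_le_one
    have := Set.uIcc_subset_uIcc (a₁ := a) (b₁ := b) (by rw [h01]; exact ha)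
      (by rw [h01]; exact hb)
    rwa [h01] at this
  apply ContinuousOn.mul
  · exact (Complex.continuous_exp.comp (Complex.continuous_ofReal.mul
      continuous_const)).continuousOn
  · exact Complex.continuous_ofReal.comp_continuousOn (hc.mono hsub)

lemma mainAux (μ : ℝ → ℝ) (hc : ContinuousOn μ (Set.Icc 0 1)) :
    Tendsto (fun L : ℂ => -L * ∫ α in (0:ℝ)..1, Complex.exp ((α:ℂ) * L) * (μ α : ℂ))
      (Filter.comap Complex.re Filter.atBot ⊓
        Filter.principal {L : ℂ | |L.im| ≤ Real.pi})
      (nhds ((μ 0 : ℂ))) := by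
  set l := Filter.comap Complex.re Filter.atBot ⊓
      Filter.principal {L : ℂ | |L.im| ≤ Real.pi} with hl
  set g : ℝ → ℝ := fun α => μ α - μ 0 with hg
  have hcg : ContinuousOn g (Set.Icc 0 1) := hc.sub continuousOn_const
  obtain ⟨M₀, hM₀⟩ := isCompact_Icc.exists_bound_of_continuousOn hcg
  set M := max M₀ 1 with hMdef
  have hM1 : (0:ℝ) < M := lt_of_lt_of_le one_pos (le_max_right _ _)
  have hM : ∀ x ∈ Set.Icc (0:ℝ) 1, |g x| ≤ M := fun x hx =>
    le_trans (hM₀ x hx) (le_max_left _ _)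
  have hre : Tendsto Complex.re l atBot := tendsto_comap.mono_left inf_le_left
  rw [Metric.tendsto_nhds]
  intro ε hε
  -- choose d from continuity of g at 0
  have h0mem : (0:ℝ) ∈ Set.Icc (0:ℝ) 1 := ⟨le_refl _, zero_le_one⟩
  have hct := hcg 0 h0mem
  rw [Metric.continuousWithinAt_iff] at hct
  obtain ⟨δ, hδ0, hδ⟩ := hct (ε/8) (by positivity)
  set d : ℝ := min (δ/2) 1 with hddef
  have hd0 : 0 < d := lt_min (by positivity) one_pos
  have hd1 : d ≤ 1 := min_le_right _ _
  have hgd : ∀ α ∈ Set.Icc (0:ℝ) d, |g α| ≤ ε/8 := by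
    intro α hα
    have hα1 : α ∈ Set.Icc (0:ℝ) 1 := ⟨hα.1, hα.2.trans hd1⟩
    have hdist : dist α 0 < δ := by
      rw [Real.dist_eq, sub_zero, abs_of_nonneg hα.1]
      calc α ≤ d := hα.2
        _ ≤ δ/2 := min_le_left _ _
        _ < δ := by linarith
    have h2 := hδ hα1 hdist
    have hg00 : g 0 = 0 := by simp [hg]
    rw [Real.dist_eq, hg00, sub_zero] at h2
    exact h2.le
  -- eventual smallness facts along atBot
  have hA : Tendsto (fun r : ℝ => 2 * (-r) * M * Real.exp (d * r)) atBot (nhds 0) := by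
    have h1 : Tendsto (fun x : ℝ => x * Real.exp (-x)) atTop (nhds 0) := by
      simpa using Real.tendsto_pow_mul_exp_neg_atTop_nhds_zero 1
    have h2 : Tendsto (fun r : ℝ => -(d*r)) atBot atTop := by
      have : Tendsto (fun r : ℝ => d * r) atBot atBot :=
        Tendsto.const_mul_atBot hd0 tendsto_id
      exact tendsto_neg_atBot_atTop.comp this
    have h3 := (h1.comp h2).const_mul (2*M/d)
    rw [mul_zero] at h3
    apply h3.congr
    intro r
    have hdne : d ≠ 0 := ne_of_gt hd0
    simp only [Function.comp_apply, neg_neg]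
    field_simp
  have hB : Tendsto (fun r : ℝ => |μ 0| * Real.exp r) atBot (nhds 0) := by
    have := Real.tendsto_exp_atBot.const_mul (|μ 0|)
    simpa using this
  have ev1 : ∀ᶠ L in l, L.re ≤ -Real.pi := hre.eventually (eventually_le_atBot _)
  have ev2 : ∀ᶠ L in l, 2 * (-L.re) * M * Real.exp (d * L.re) < ε/4 :=
    hre.eventually (hA.eventually_lt_const (by positivity))
  have ev3 : ∀ᶠ L in l, |μ 0| * Real.exp L.re < ε/4 :=
    hre.eventually (hB.eventually_lt_const (by positivity))
  have evIm : ∀ᶠ L in l, |L.im| ≤ Real.pi := by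
    have : {L : ℂ | |L.im| ≤ Real.pi} ∈ l :=
      mem_inf_of_right (mem_principal_self _)
    exact this
  filter_upwards [ev1, ev2, ev3, evIm] with L hL1 hL2 hL3 hLim
  have hπ : (0:ℝ) < Real.pi := Real.pi_pos
  have hr0 : L.re < 0 := lt_of_le_of_lt hL1 (by linarith)
  have hLne : L ≠ 0 := by
    intro h
    rw [h] at hr0
    simp at hr0
  have hnormL : ‖L‖ ≤ 2 * (-L.re) := by
    calc ‖L‖ = ‖L‖ := rfl
      _ ≤ |L.re| + |L.im| := Complex.norm_le_abs_re_add_abs_im L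
      _ ≤ (-L.re) + Real.pi := by rw [abs_of_neg hr0]; linarith
      _ ≤ 2 * (-L.re) := by linarith
  -- integrability
  have hint_g : ∀ a b : ℝ, a ∈ Set.Icc (0:ℝ) 1 → b ∈ Set.Icc (0:ℝ) 1 →
      IntervalIntegrable (fun α : ℝ => Complex.exp ((α:ℂ)*L) * (g α : ℂ)) volume a b :=
    fun a b ha hb => intAux hcg L ha hb
  have hd01 : d ∈ Set.Icc (0:ℝ) 1 := ⟨hd0.le, hd1⟩
  have h101 : (1:ℝ) ∈ Set.Icc (0:ℝ) 1 := ⟨zero_le_one, le_refl _⟩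
  -- value of ∫ exp(αL)
  have hexp_int : (∫ α in (0:ℝ)..1, Complex.exp ((α:ℂ)*L)) = (Complex.exp L - 1)/L := by
    have h := integral_exp_mul_complex (a := 0) (b := 1) hLne
    simp only [Complex.ofReal_one, mul_one, Complex.ofReal_zero, mul_zero,
      Complex.exp_zero] at h
    rw [← h]
    apply intervalIntegral.integral_congr
    intro x _
    dsimp only
    rw [mul_comm]
  -- decomposition
  set A : ℂ := ∫ α in (0:ℝ)..1, Complex.exp ((α:ℂ)*L) * (g α : ℂ) with hA'
  have hsplitμ : (∫ α in (0:ℝ)..1, Complex.exp ((α:ℂ)*L) * (μ α : ℂ)) =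
      A + (μ 0 : ℂ) * ((Complex.exp L - 1)/L) := by
    have hint1 := hint_g 0 1 h0mem h101
    have hint2 : IntervalIntegrable (fun α : ℝ => Complex.exp ((α:ℂ)*L) * ((μ 0 : ℝ) : ℂ))
        volume 0 1 := intAux continuousOn_const L h0mem h101
    have heq : ∀ α : ℝ, Complex.exp ((α:ℂ)*L) * (μ α : ℂ) =
        Complex.exp ((α:ℂ)*L) * (g α : ℂ) + Complex.exp ((α:ℂ)*L) * ((μ 0 : ℝ) : ℂ) := by
      intro α
      have : ((μ α : ℝ) : ℂ) = ((g α : ℝ) : ℂ) + ((μ 0 : ℝ) : ℂ) := by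
        simp [hg]
      rw [this, mul_add]
    rw [intervalIntegral.integral_congr (fun α _ => heq α),
      intervalIntegral.integral_add hint1 hint2,
      intervalIntegral.integral_mul_const, hexp_int]
    ring
  have hkey : -L * (∫ α in (0:ℝ)..1, Complex.exp ((α:ℂ)*L) * (μ α : ℂ)) - (μ 0 : ℂ)
      = -L * A - (μ 0 : ℂ) * Complex.exp L := by
    rw [hsplitμ]
    field_simp
    ring
  rw [dist_eq_norm]
  have hkey' : -L * (∫ α in (0:ℝ)..1, Complex.exp ((α:ℂ)*L) * (μ α : ℂ)) - (μ 0 : ℂ)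
      = -L * A - (μ 0 : ℂ) * Complex.exp L := hkey
  rw [hkey']
  -- split A
  set A₁ : ℂ := ∫ α in (0:ℝ)..d, Complex.exp ((α:ℂ)*L) * (g α : ℂ) with hA₁
  set A₂ : ℂ := ∫ α in d..1, Complex.exp ((α:ℂ)*L) * (g α : ℂ) with hA₂
  have hAsplit : A = A₁ + A₂ :=
    (intervalIntegral.integral_add_adjacent_intervals
      (hint_g 0 d h0mem hd01) (hint_g d 1 hd01 h101)).symm
  -- pointwise norm formula
  have hnormpt : ∀ α : ℝ, ‖Complex.exp ((α:ℂ)*L) * (g α : ℂ)‖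
      = Real.exp (α * L.re) * |g α| := by
    intro α
    rw [norm_mul, Complex.norm_exp,
      Complex.norm_real, Real.norm_eq_abs]
    congr 1
    simp [Complex.mul_re]
  -- bound on A₁
  have hintexp : ∀ a b : ℝ, IntervalIntegrable (fun α : ℝ => Real.exp (α * L.re) * (ε/8))
      volume a b := by
    intro a b
    apply Continuous.intervalIntegrable
    exact (Real.continuous_exp.comp (continuous_id.mul continuous_const)).mul
      continuous_const
  have hexpval : (∫ α in (0:ℝ)..d, Real.exp (α * L.re)) = (Real.exp (d * L.re) - 1)/L.re := by
    have h := intervalIntegral.integral_comp_mul_right Real.exp (ne_of_lt hr0)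
      (a := 0) (b := d)
    rw [h]
    rw [integral_exp]
    simp [div_eq_inv_mul]
  have hA1bound : ‖A₁‖ ≤ (ε/8) * (1/(-L.re)) := by
    have step1 : ‖A₁‖ ≤ ∫ α in (0:ℝ)..d, ‖Complex.exp ((α:ℂ)*L) * (g α : ℂ)‖ :=
      intervalIntegral.norm_integral_le_integral_norm hd0.le
    have step2 : (∫ α in (0:ℝ)..d, ‖Complex.exp ((α:ℂ)*L) * (g α : ℂ)‖)
        ≤ ∫ α in (0:ℝ)..d, Real.exp (α * L.re) * (ε/8) := by
      apply intervalIntegral.integral_mono_on hd0.le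
      · exact (hint_g 0 d h0mem hd01).norm
      · exact hintexp 0 d
      · intro x hx
        rw [hnormpt x]
        exact mul_le_mul_of_nonneg_left (hgd x hx) (Real.exp_pos _).le
    have step3 : (∫ α in (0:ℝ)..d, Real.exp (α * L.re) * (ε/8))
        = ((Real.exp (d * L.re) - 1)/L.re) * (ε/8) := by
      rw [intervalIntegral.integral_mul_const, hexpval]
    have step4 : ((Real.exp (d * L.re) - 1)/L.re) ≤ 1/(-L.re) := by
      have hpos : (0:ℝ) < -L.re := by linarith
      have heq : (Real.exp (d * L.re) - 1)/L.re = (1 - Real.exp (d * L.re))/(-L.re) := by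
        rw [div_eq_div_iff (ne_of_lt hr0) (ne_of_gt hpos)]
        ring
      rw [heq]
      gcongr
      linarith [Real.exp_pos (d * L.re)]
    calc ‖A₁‖ ≤ ((Real.exp (d * L.re) - 1)/L.re) * (ε/8) := by
          rw [← step3]; exact step1.trans step2
      _ ≤ (1/(-L.re)) * (ε/8) := by
          apply mul_le_mul_of_nonneg_right step4 (by positivity)
      _ = (ε/8) * (1/(-L.re)) := by ring
  -- bound on A₂
  have hA2bound : ‖A₂‖ ≤ M * Real.exp (d * L.re) := by
    have hb : ∀ x ∈ Set.uIoc d 1, ‖Complex.exp ((x:ℂ)*L) * (g x : ℂ)‖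
        ≤ M * Real.exp (d * L.re) := by
      intro x hx
      rw [Set.uIoc_of_le hd1] at hx
      have hx01 : x ∈ Set.Icc (0:ℝ) 1 := ⟨hd0.le.trans hx.1.le, hx.2⟩
      rw [hnormpt x]
      have h1 : Real.exp (x * L.re) ≤ Real.exp (d * L.re) := by
        apply Real.exp_le_exp.mpr
        nlinarith [hx.1.le]
      calc Real.exp (x * L.re) * |g x| ≤ Real.exp (d * L.re) * M :=
            mul_le_mul h1 (hM x hx01) (abs_nonneg _) (Real.exp_pos _).le
        _ = M * Real.exp (d * L.re) := by ring
    have := intervalIntegral.norm_integral_le_of_norm_le_const hb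
    calc ‖A₂‖ ≤ M * Real.exp (d * L.re) * |1 - d| := this
      _ ≤ M * Real.exp (d * L.re) * 1 := by
          have h1d : |1 - d| ≤ 1 := by
            rw [abs_of_nonneg (by linarith)]
            linarith
          exact mul_le_mul_of_nonneg_left h1d (mul_nonneg hM1.le (Real.exp_pos _).le)
      _ = M * Real.exp (d * L.re) := by ring
  -- combine
  have habs : ‖-L * A - (μ 0 : ℂ) * Complex.exp L‖
      ≤ ‖L‖ * (‖A₁‖ + ‖A₂‖) + |μ 0| * Real.exp L.re := by
    have h1 : ‖-L * A - (μ 0 : ℂ) * Complex.exp L‖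
        ≤ ‖-L * A‖ + ‖(μ 0 : ℂ) * Complex.exp L‖ := norm_sub_le _ _
    have h2 : ‖-L * A‖ = ‖L‖ * ‖A‖ := by rw [norm_mul, norm_neg]
    have h3 : ‖A‖ ≤ ‖A₁‖ + ‖A₂‖ := by rw [hAsplit]; exact norm_add_le _ _
    have h4 : ‖(μ 0 : ℂ) * Complex.exp L‖ = |μ 0| * Real.exp L.re := by
      rw [norm_mul, Complex.norm_real, Real.norm_eq_abs,
        Complex.norm_exp]
    calc ‖-L * A - (μ 0 : ℂ) * Complex.exp L‖
        ≤ ‖-L * A‖ + ‖(μ 0 : ℂ) * Complex.exp L‖ := h1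
      _ = ‖L‖ * ‖A‖ + |μ 0| * Real.exp L.re := by rw [h2, h4]
      _ ≤ ‖L‖ * (‖A₁‖ + ‖A₂‖) + |μ 0| * Real.exp L.re := by
          have := mul_le_mul_of_nonneg_left h3 (norm_nonneg L)
          linarith
  have hLA : ‖L‖ * (‖A₁‖ + ‖A₂‖) ≤ 2 * (-L.re) * ((ε/8) * (1/(-L.re)))
      + 2 * (-L.re) * (M * Real.exp (d * L.re)) := by
    have hpos : (0:ℝ) ≤ 2 * (-L.re) := by linarith
    have h1 : ‖L‖ * (‖A₁‖ + ‖A₂‖) ≤ (2 * (-L.re)) * (‖A₁‖ + ‖A₂‖) := by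
      apply mul_le_mul_of_nonneg_right hnormL
      positivity
    have h2 : (2 * (-L.re)) * (‖A₁‖ + ‖A₂‖)
        ≤ (2 * (-L.re)) * ((ε/8) * (1/(-L.re)) + M * Real.exp (d * L.re)) := by
      apply mul_le_mul_of_nonneg_left _ hpos
      linarith [hA1bound, hA2bound]
    calc ‖L‖ * (‖A₁‖ + ‖A₂‖) ≤ (2 * (-L.re)) * ((ε/8) * (1/(-L.re)) + M * Real.exp (d * L.re)) :=
          h1.trans h2
      _ = 2 * (-L.re) * ((ε/8) * (1/(-L.re))) + 2 * (-L.re) * (M * Real.exp (d * L.re)) := by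
          ring
  have heq1 : 2 * (-L.re) * ((ε/8) * (1/(-L.re))) = ε/4 := by
    have hne : L.re ≠ 0 := ne_of_lt hr0
    field_simp
    ring
  have heq2 : 2 * (-L.re) * (M * Real.exp (d * L.re)) = 2 * (-L.re) * M * Real.exp (d * L.re) := by
    ring
  calc ‖-L * A - (μ 0 : ℂ) * Complex.exp L‖
      ≤ ‖L‖ * (‖A₁‖ + ‖A₂‖) + |μ 0| * Real.exp L.re := habs
    _ ≤ (2 * (-L.re) * ((ε/8) * (1/(-L.re))) + 2 * (-L.re) * (M * Real.exp (d * L.re)))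
        + |μ 0| * Real.exp L.re := by linarith
    _ < ε/4 + ε/4 + ε/4 := by rw [heq1]; rw [heq2] at *; linarith
    _ < ε := by linarith

theorem Kfun_asymp_zero (μ : ℝ → ℝ)
    (hc : ContinuousOn μ (Set.Icc 0 1)) (h0 : μ 0 ≠ 0) :
    Tendsto (fun p : ℂ => p * (-Complex.log p) * Kfun μ p)
      (nhdsWithin 0 Complex.slitPlane) (nhds ((μ 0 : ℂ))) := by
  set l := Filter.comap Complex.re Filter.atBot ⊓
      Filter.principal {L : ℂ | |L.im| ≤ Real.pi} with hl
  have hlog : Tendsto Complex.log (nhdsWithin 0 Complex.slitPlane) l := by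
    rw [hl, tendsto_inf]
    constructor
    · rw [Filter.tendsto_comap_iff]
      have habs : Tendsto (fun p : ℂ => ‖p‖) (nhdsWithin 0 Complex.slitPlane)
          (nhdsWithin 0 (Set.Ioi 0)) := by
        rw [tendsto_nhdsWithin_iff]
        constructor
        · have := (continuous_norm.tendsto (0:ℂ)).mono_left
            (nhdsWithin_le_nhds (s := Complex.slitPlane))
          simpa using this
        · filter_upwards [self_mem_nhdsWithin] with p hp
          exact norm_pos_iff.mpr (Complex.slitPlane_ne_zero hp)
      have hloglim : Tendsto Real.log (nhdsWithin 0 (Set.Ioi 0)) atBot :=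
        Real.tendsto_log_nhdsNE_zero.mono_left
          (nhdsWithin_mono 0 (fun x hx => ne_of_gt hx))
      have := hloglim.comp habs
      apply this.congr
      intro p
      exact (Complex.log_re p).symm
    · rw [tendsto_principal]
      filter_upwards with p
      exact abs_le.mpr ⟨(Complex.neg_pi_lt_log_im p).le, Complex.log_im_le_pi p⟩
  have hcomp := (mainAux μ hc).comp hlog
  apply hcomp.congr'
  filter_upwards [self_mem_nhdsWithin] with p hp
  have hpne : p ≠ 0 := Complex.slitPlane_ne_zero hp
  show -Complex.log p * (∫ α in (0:ℝ)..1, Complex.exp ((α:ℂ) * Complex.log p) * (μ α : ℂ))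
      = p * (-Complex.log p) * Kfun μ p
  have hint : p * (∫ α in (0:ℝ)..1, Complex.exp (((α:ℂ)-1) * Complex.log p) * (μ α : ℂ))
      = ∫ α in (0:ℝ)..1, Complex.exp ((α:ℂ) * Complex.log p) * (μ α : ℂ) := by
    rw [← intervalIntegral.integral_const_mul]
    apply intervalIntegral.integral_congr
    intro α _
    dsimp only
    calc p * (Complex.exp (((α:ℂ)-1) * Complex.log p) * (μ α : ℂ))
        = Complex.exp (Complex.log p) * Complex.exp (((α:ℂ)-1) * Complex.log p) * (μ α : ℂ) := by
          rw [Complex.exp_log hpne]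
          ring
      _ = Complex.exp (Complex.log p + ((α:ℂ)-1) * Complex.log p) * (μ α : ℂ) := by
          rw [Complex.exp_add]
      _ = Complex.exp ((α:ℂ) * Complex.log p) * (μ α : ℂ) := by
          rw [show Complex.log p + ((α:ℂ)-1) * Complex.log p = (α:ℂ) * Complex.log p from by ring]
  rw [Kfun, show p * (-Complex.log p) = -Complex.log p * p from by ring, mul_assoc, hint]
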